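/- arXiv:0911.3816 — 2 statements merged into one kernel-verified Lean document; each statement's English description precedes it below -/
import Mathlib

section
/- Let n ≥ 1, let C > 0, and define Ĝ(r,t) = C t^{-n/2} e^{-r²/(Ct)} for r ≥ 0, t > 0, extended by 0 for t ≤ 0. Then for every q with 1 < q < (n+2)/(n+1) there exists a finite constant C' = C'(n,q,C) such that for all (ξ,τ) ∈ ℝⁿ × (−1,0], (∫_{−1}^{0} ∫_{ℝⁿ} ((τ−ζ)^{-1/2} Ĝ(|ξ−η|, τ−ζ))^q dη dζ)^{1/q} ≤ C'. -/
open MeasureTheory Real Set Metric Filter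


private lemma meas_rpow_const {α : Type*} [MeasurableSpace α] {f : α → ℝ} (hf : Measurable f)
    (c : ℝ) : Measurable fun x => f x ^ c := by fun_prop

set_option maxHeartbeats 2000000 in
theorem dkb_aux (n : ℕ) (C : ℝ) (hC : 0 < C)
    (q : ℝ) (hq : 1 < q) (hq' : q < ((n : ℝ) + 2) / ((n : ℝ) + 1))
    (ξ : EuclideanSpace ℝ (Fin n)) (τ : ℝ) (hτ : τ ∈ Set.Ioc (-1 : ℝ) 0) :
    (∫ p in (Set.univ ×ˢ Set.Ioo (-1:ℝ) 0 : Set (EuclideanSpace ℝ (Fin n) × ℝ)),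
        ((τ - p.2) ^ (-(1:ℝ) / 2) *
          (if 0 < τ - p.2 then
            C * (τ - p.2) ^ (-(n : ℝ) / 2) * Real.exp (-‖ξ - p.1‖ ^ 2 / (C * (τ - p.2)))
          else 0)) ^ q) ^ (1 / q) ≤
    (C ^ q * (π * C / q) ^ ((n : ℝ) / 2) *
        (∫ x in Set.Ioo (0:ℝ) 1, x ^ (-(q * ((n : ℝ) + 1) / 2 - (n : ℝ) / 2))) + 1) ^ (1 / q) := by
  have hq0 : (0:ℝ) < q := lt_trans one_pos hq
  have hqne : q ≠ 0 := ne_of_gt hq0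
  set α : ℝ := q * ((n : ℝ) + 1) / 2 - (n : ℝ) / 2 with hα
  have hn1 : (0:ℝ) < (n:ℝ) + 1 := by positivity
  have hα1 : -1 < -α := by
    have := (lt_div_iff₀ hn1).1 hq'
    have : q * ((n:ℝ) + 1) < (n:ℝ) + 2 := by linarith
    simp only [hα]; linarith
  set K : ℝ := C ^ q * (π * C / q) ^ ((n : ℝ) / 2) with hKdef
  have hK : 0 < K := by positivity
  set J : ℝ := ∫ x in Set.Ioo (0:ℝ) 1, x ^ (-α) with hJdef
  have hJint : IntegrableOn (fun x : ℝ => x ^ (-α)) (Ioo (0:ℝ) 1) :=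
    (intervalIntegral.integrableOn_Ioo_rpow_iff one_pos).2 hα1
  have hJ0 : 0 ≤ J :=
    setIntegral_nonneg measurableSet_Ioo fun x hx => Real.rpow_nonneg hx.1.le _
  set F : EuclideanSpace ℝ (Fin n) × ℝ → ℝ := fun p =>
    ((τ - p.2) ^ (-(1:ℝ) / 2) *
      (if 0 < τ - p.2 then
        C * (τ - p.2) ^ (-(n : ℝ) / 2) * Real.exp (-‖ξ - p.1‖ ^ 2 / (C * (τ - p.2)))
      else 0)) ^ q with hFdef
  have hF0 : ∀ p, 0 ≤ F p := by
    intro p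
    rcases lt_or_ge 0 (τ - p.2) with h | h
    · exact Real.rpow_nonneg (mul_nonneg (Real.rpow_nonneg h.le _) (by rw [if_pos h]; positivity)) _
    · simp only [hFdef, if_neg (not_lt.2 h), mul_zero, Real.zero_rpow hqne, le_refl]
  have hFmeas : Measurable F := by
    rw [hFdef]
    have m1 : Measurable fun p : EuclideanSpace ℝ (Fin n) × ℝ => τ - p.2 :=
      measurable_const.sub measurable_snd
    have m2 : Measurable fun p : EuclideanSpace ℝ (Fin n) × ℝ => ‖ξ - p.1‖ :=
      ((continuous_const.sub continuous_fst).norm).measurable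
    exact meas_rpow_const (((meas_rpow_const m1 _).mul (Measurable.ite
      (measurableSet_lt measurable_const m1)
      ((measurable_const.mul (meas_rpow_const m1 _)).mul
        (((m2.pow_const 2).neg.div (measurable_const.mul m1)).exp))
      measurable_const))) _
  -- the indicator function on (0,1)
  set h : ℝ → ENNReal := fun s => (Ioo (0:ℝ) 1).indicator (fun s => ENNReal.ofReal (s ^ (-α))) s
    with hhdef
  have hhmeas : Measurable h :=
    Measurable.indicator (Measurable.ennreal_ofReal (meas_rpow_const measurable_id _)) measurableSet_Ioo
  -- inner integral computation
  have inner_le : ∀ ζ ∈ Ioo (-1:ℝ) 0,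
      (∫⁻ η, ENNReal.ofReal (F (η, ζ))) ≤ ENNReal.ofReal K * h (τ - ζ) := by
    intro ζ hζ
    by_cases hs : 0 < τ - ζ
    · have hs1 : τ - ζ < 1 := by
        have := hζ.1; have := hτ.2; linarith
      have hb : 0 < q / (C * (τ - ζ)) := by positivity
      set b : ℝ := q / (C * (τ - ζ)) with hbdef
      set A : ℝ := C ^ q * (τ - ζ) ^ (-(1:ℝ)/2 * q) * (τ - ζ) ^ (-(n:ℝ)/2 * q) with hAdef
      have hA0 : 0 ≤ A :=
        mul_nonneg (mul_nonneg (Real.rpow_nonneg hC.le _) (Real.rpow_nonneg hs.le _))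
          (Real.rpow_nonneg hs.le _)
      have hpt : ∀ η : EuclideanSpace ℝ (Fin n), F (η, ζ) = A * rexp (-b * ‖ξ - η‖ ^ 2) := by
        intro η
        simp only [hFdef, if_pos hs]
        rw [Real.mul_rpow (Real.rpow_nonneg hs.le _) (by positivity),
          Real.mul_rpow (by positivity) (Real.exp_pos _).le,
          Real.mul_rpow hC.le (Real.rpow_nonneg hs.le _),
          ← Real.rpow_mul hs.le, ← Real.rpow_mul hs.le, ← Real.exp_mul,
          show -‖ξ - η‖ ^ 2 / (C * (τ - ζ)) * q = -b * ‖ξ - η‖ ^ 2 by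
            rw [hbdef]; field_simp]
        rw [hAdef]; ring
      have hint : Integrable (fun η : EuclideanSpace ℝ (Fin n) => rexp (-b * ‖η‖ ^ 2)) := by
        have h1 := GaussianFourier.integrable_cexp_neg_mul_sq_norm_add
          (b := (b:ℂ)) (by simpa using hb) 0 (0 : EuclideanSpace ℝ (Fin n))
        have h2 : (fun v : EuclideanSpace ℝ (Fin n) => ‖Complex.exp (-(b:ℂ) * (‖v‖:ℂ) ^ 2 + 0 * ((inner ℝ (0:EuclideanSpace ℝ (Fin n)) v : ℝ) : ℂ))‖)
            = fun v : EuclideanSpace ℝ (Fin n) => rexp (-b * ‖v‖ ^ 2) := by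
          funext v
          rw [Complex.norm_exp]
          norm_num [← Complex.ofReal_pow]
        have := h1.norm
        rwa [h2] at this
      have hGauss : (∫⁻ η : EuclideanSpace ℝ (Fin n), ENNReal.ofReal (rexp (-b * ‖ξ - η‖ ^ 2)))
          = ENNReal.ofReal ((π / b) ^ ((n:ℝ) / 2)) := by
        have h1 : ∀ η : EuclideanSpace ℝ (Fin n), ‖ξ - η‖ = ‖-ξ + η‖ := by
          intro η; rw [norm_sub_rev, sub_eq_neg_add]
        simp_rw [h1]
        rw [lintegral_add_left_eq_self (fun η => ENNReal.ofReal (rexp (-b * ‖η‖ ^ 2))) (-ξ),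
          ← ofReal_integral_eq_lintegral_ofReal hint
            (Eventually.of_forall fun _ => (Real.exp_pos _).le),
          GaussianFourier.integral_rexp_neg_mul_sq_norm hb]
        norm_num [finrank_euclideanSpace_fin]
      have hfinal : A * (π / b) ^ ((n:ℝ) / 2) = K * (τ - ζ) ^ (-α) := by
        have hπb : π / b = (π * C / q) * (τ - ζ) := by
          rw [hbdef]; field_simp
        rw [hπb, Real.mul_rpow (by positivity) hs.le, hAdef, hKdef]
        rw [show C ^ q * (τ - ζ) ^ (-(1:ℝ)/2 * q) * (τ - ζ) ^ (-(n:ℝ)/2 * q) *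
            ((π * C / q) ^ ((n:ℝ)/2) * (τ - ζ) ^ ((n:ℝ)/2)) =
            C ^ q * (π * C / q) ^ ((n:ℝ)/2) *
              ((τ - ζ) ^ (-(1:ℝ)/2 * q) * (τ - ζ) ^ (-(n:ℝ)/2 * q) * (τ - ζ) ^ ((n:ℝ)/2))
          from by ring]
        congr 1
        rw [← Real.rpow_add hs, ← Real.rpow_add hs]
        congr 1
        simp only [hα]; ring
      refine le_of_eq ?_
      calc (∫⁻ η, ENNReal.ofReal (F (η, ζ)))
          = ∫⁻ η, ENNReal.ofReal A * ENNReal.ofReal (rexp (-b * ‖ξ - η‖ ^ 2)) :=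
            lintegral_congr fun η => by rw [hpt η, ENNReal.ofReal_mul hA0]
        _ = ENNReal.ofReal A * ∫⁻ η, ENNReal.ofReal (rexp (-b * ‖ξ - η‖ ^ 2)) :=
            lintegral_const_mul' _ _ ENNReal.ofReal_ne_top
        _ = ENNReal.ofReal A * ENNReal.ofReal ((π / b) ^ ((n:ℝ) / 2)) := by rw [hGauss]
        _ = ENNReal.ofReal (A * (π / b) ^ ((n:ℝ) / 2)) := (ENNReal.ofReal_mul hA0).symm
        _ = ENNReal.ofReal K * h (τ - ζ) := by
            rw [hhdef]
            simp only [indicator_of_mem (show τ - ζ ∈ Ioo (0:ℝ) 1 from ⟨hs, hs1⟩)]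
            rw [← ENNReal.ofReal_mul hK.le, hfinal]
    · have : ∀ η : EuclideanSpace ℝ (Fin n), F (η, ζ) = 0 := by
        intro η
        simp only [hFdef, if_neg hs, mul_zero, Real.zero_rpow hqne]
      simp only [this, ENNReal.ofReal_zero, lintegral_zero]
      exact zero_le
  -- main bound on the lintegral
  have main : (∫⁻ p in (Set.univ ×ˢ Set.Ioo (-1:ℝ) 0 : Set (EuclideanSpace ℝ (Fin n) × ℝ)), ENNReal.ofReal (F p)) ≤
      ENNReal.ofReal (K * J) := by
    have hrestrict : (volume : Measure (EuclideanSpace ℝ (Fin n) × ℝ)).restrict (Set.univ ×ˢ Set.Ioo (-1:ℝ) 0) =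
        (volume : Measure (EuclideanSpace ℝ (Fin n))).prod ((volume : Measure ℝ).restrict (Ioo (-1:ℝ) 0)) := by
      rw [Measure.volume_eq_prod, ← Measure.prod_restrict, Measure.restrict_univ]
    rw [hrestrict]
    calc (∫⁻ p, ENNReal.ofReal (F p) ∂((volume : Measure (EuclideanSpace ℝ (Fin n))).prod
            ((volume : Measure ℝ).restrict (Ioo (-1:ℝ) 0))))
        = ∫⁻ ζ in Ioo (-1:ℝ) 0, ∫⁻ η, ENNReal.ofReal (F (η, ζ)) := by
          exact lintegral_prod_symm _ (hFmeas.ennreal_ofReal).aemeasurable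
      _ ≤ ∫⁻ ζ in Ioo (-1:ℝ) 0, ENNReal.ofReal K * h (τ - ζ) := by
          refine lintegral_mono_ae ?_
          exact (ae_restrict_mem measurableSet_Ioo).mono fun ζ hζ => inner_le ζ hζ
      _ ≤ ∫⁻ ζ, ENNReal.ofReal K * h (τ - ζ) := setLIntegral_le_lintegral _ _
      _ = ENNReal.ofReal K * ∫⁻ ζ, h (τ - ζ) :=
          lintegral_const_mul' _ _ ENNReal.ofReal_ne_top
      _ = ENNReal.ofReal K * ∫⁻ s, h s := by
          rw [(Measure.measurePreserving_sub_left volume τ).lintegral_comp hhmeas]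
      _ = ENNReal.ofReal K * ∫⁻ s in Ioo (0:ℝ) 1, ENNReal.ofReal (s ^ (-α)) := by
          rw [hhdef, lintegral_indicator measurableSet_Ioo]
      _ = ENNReal.ofReal K * ENNReal.ofReal J := by
          rw [hJdef, ofReal_integral_eq_lintegral_ofReal hJint
            ((ae_restrict_mem measurableSet_Ioo).mono fun x hx => Real.rpow_nonneg hx.1.le _)]
      _ = ENNReal.ofReal (K * J) := (ENNReal.ofReal_mul hK.le).symm
  -- convert to the real integral
  have hIeq : (∫ p in (Set.univ ×ˢ Set.Ioo (-1:ℝ) 0 : Set (EuclideanSpace ℝ (Fin n) × ℝ)), F p) =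
      (∫⁻ p in (Set.univ ×ˢ Set.Ioo (-1:ℝ) 0 : Set (EuclideanSpace ℝ (Fin n) × ℝ)), ENNReal.ofReal (F p)).toReal :=
    integral_eq_lintegral_of_nonneg_ae (Eventually.of_forall hF0)
      hFmeas.aestronglyMeasurable.restrict
  have hIle : (∫ p in (Set.univ ×ˢ Set.Ioo (-1:ℝ) 0 : Set (EuclideanSpace ℝ (Fin n) × ℝ)), F p) ≤ K * J := by
    rw [hIeq]
    calc (∫⁻ p in (Set.univ ×ˢ Set.Ioo (-1:ℝ) 0 : Set (EuclideanSpace ℝ (Fin n) × ℝ)), ENNReal.ofReal (F p)).toReal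
        ≤ (ENNReal.ofReal (K * J)).toReal := ENNReal.toReal_mono ENNReal.ofReal_ne_top main
      _ = K * J := ENNReal.toReal_ofReal (by positivity)
  have hI0 : 0 ≤ (∫ p in (Set.univ ×ˢ Set.Ioo (-1:ℝ) 0 : Set (EuclideanSpace ℝ (Fin n) × ℝ)), F p) := by
    rw [hIeq]; exact ENNReal.toReal_nonneg
  exact Real.rpow_le_rpow hI0 (by linarith) (by positivity)

theorem dirichlet_kernel_Lq_bound (n : ℕ) (hn : 1 ≤ n) (C : ℝ) (hC : 0 < C)
    (q : ℝ) (hq : 1 < q) (hq' : q < ((n : ℝ) + 2) / ((n : ℝ) + 1))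
    (Ghat : ℝ → ℝ → ℝ)
    (hGpos : ∀ (r t : ℝ), 0 < t →
      Ghat r t = C * t ^ (-(n : ℝ) / 2) * Real.exp (-r ^ 2 / (C * t)))
    (hGnonpos : ∀ (r t : ℝ), t ≤ 0 → Ghat r t = 0) :
    ∃ C' : ℝ, 0 < C' ∧ ∀ (ξ : EuclideanSpace ℝ (Fin n)) (τ : ℝ), τ ∈ Set.Ioc (-1 : ℝ) 0 →
      (∫ p in (Set.univ ×ˢ Set.Ioo (-1:ℝ) 0 : Set (EuclideanSpace ℝ (Fin n) × ℝ)),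
          ((τ - p.2) ^ (-(1:ℝ) / 2) * Ghat ‖ξ - p.1‖ (τ - p.2)) ^ q) ^ (1 / q) ≤ C' := by
  have hq0 : (0:ℝ) < q := lt_trans one_pos hq
  have hG : ∀ r t : ℝ, Ghat r t =
      if 0 < t then C * t ^ (-(n : ℝ) / 2) * Real.exp (-r ^ 2 / (C * t)) else 0 := by
    intro r t
    by_cases ht : 0 < t
    · rw [if_pos ht, hGpos r t ht]
    · rw [if_neg ht, hGnonpos r t (not_lt.1 ht)]
  refine ⟨(C ^ q * (π * C / q) ^ ((n : ℝ) / 2) *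
      (∫ x in Set.Ioo (0:ℝ) 1, x ^ (-(q * ((n : ℝ) + 1) / 2 - (n : ℝ) / 2))) + 1) ^ (1 / q),
    ?_, ?_⟩
  · have hJ0 : 0 ≤ ∫ x in Set.Ioo (0:ℝ) 1, x ^ (-(q * ((n : ℝ) + 1) / 2 - (n : ℝ) / 2)) :=
      setIntegral_nonneg measurableSet_Ioo fun x hx => Real.rpow_nonneg hx.1.le _
    have hK : (0:ℝ) < C ^ q * (π * C / q) ^ ((n : ℝ) / 2) := by positivity
    apply Real.rpow_pos_of_pos
    nlinarith
  · intro ξ τ hτ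
    simp only [hG]
    exact dkb_aux n C hC q hq hq' ξ τ hτ
end

section
/- Let G be a nonnegative kernel on Ω × Ω × (0,∞) satisfying ∫_Ω G(x,y,t) dy ≤ 1 for all x ∈ Ω and t > 0, and possessing the semigroup/comparison property used for the Dirichlet heat kernel. Suppose G(x,y,t) ≤ (ρ(x)/√t ∧ 1)(ρ(y)/√t ∧ 1) Ĝ(|x−y|,t) for x,y ∈ Ω, 0 < t ≤ T, where Ĝ(r,t) = C t^{-n/2}e^{-r²/(Ct)} and ρ(x) = dist(x,∂Ω). Then for any finite positive measure with density w(y) ≥ 0 satisfying ∫_Ω w(y)ρ(y) dy ≤ M, one has ∫_Ω G(x,y,t) w(y) dy ≤ C' M (ρ(x)/√t ∧ 1) t^{-(n+1)/2} for all x ∈ Ω and 0 < t ≤ T, where C' depends only on n and C. -/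
open MeasureTheory Real Set Metric Filter

theorem kernel_weighted_bound (n : ℕ) (hn : 1 ≤ n) (T C M : ℝ)
    (hT : 0 < T) (hC : 0 < C) (hM : 0 ≤ M)
    (Ω : Set (EuclideanSpace ℝ (Fin n))) (hΩo : IsOpen Ω)
    (hΩb : Bornology.IsBounded Ω) (hΩne : Ω.Nonempty)
    (ρ : EuclideanSpace ℝ (Fin n) → ℝ)
    (hρ : ∀ x, ρ x = Metric.infDist x (frontier Ω))
    (Ghat : ℝ → ℝ → ℝ)
    (hGhat : ∀ (r t : ℝ), 0 < t →
      Ghat r t = C * t ^ (-(n : ℝ) / 2) * Real.exp (-r ^ 2 / (C * t)))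
    (G : EuclideanSpace ℝ (Fin n) → EuclideanSpace ℝ (Fin n) → ℝ → ℝ)
    (hG0 : ∀ x y t, 0 ≤ G x y t)
    (hGmass : ∀ x ∈ Ω, ∀ t : ℝ, 0 < t → ∫ y in Ω, G x y t ≤ 1)
    (hGbd : ∀ x ∈ Ω, ∀ y ∈ Ω, ∀ t ∈ Set.Ioc (0:ℝ) T,
      G x y t ≤ min (ρ x / Real.sqrt t) 1 * min (ρ y / Real.sqrt t) 1
        * Ghat ‖x - y‖ t)
    (w : EuclideanSpace ℝ (Fin n) → ℝ) (hw0 : ∀ y, 0 ≤ w y)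
    (hwmeas : Measurable w)
    (hwint : IntegrableOn (fun y => w y * ρ y) Ω)
    (hwM : ∫ y in Ω, w y * ρ y ≤ M) :
    ∃ C' : ℝ, 0 < C' ∧ ∀ x ∈ Ω, ∀ t ∈ Set.Ioc (0:ℝ) T,
      ∫ y in Ω, G x y t * w y
        ≤ C' * M * min (ρ x / Real.sqrt t) 1 * t ^ (-((n : ℝ) + 1) / 2) := by
  refine ⟨C, hC, ?_⟩
  intro x hx t ht
  obtain ⟨ht0, htT⟩ := ht
  have hst : 0 < Real.sqrt t := Real.sqrt_pos.mpr ht0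
  have hρx : 0 ≤ ρ x := by rw [hρ]; exact Metric.infDist_nonneg
  have hminx : 0 ≤ min (ρ x / Real.sqrt t) 1 := le_min (by positivity) zero_le_one
  have htp : 0 < t ^ (-(n : ℝ) / 2) := Real.rpow_pos_of_pos ht0 _
  set K := min (ρ x / Real.sqrt t) 1 * (C * t ^ (-(n : ℝ) / 2)) / Real.sqrt t with hK
  have hK0 : 0 ≤ K := by positivity
  have hpt : ∀ y ∈ Ω, G x y t * w y ≤ K * (w y * ρ y) := by
    intro y hy
    have hρy : 0 ≤ ρ y := by rw [hρ]; exact Metric.infDist_nonneg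
    have h1 : G x y t ≤ min (ρ x / Real.sqrt t) 1 * min (ρ y / Real.sqrt t) 1
        * Ghat ‖x - y‖ t := hGbd x hx y hy t ⟨ht0, htT⟩
    have h2 : Ghat ‖x - y‖ t ≤ C * t ^ (-(n : ℝ) / 2) := by
      rw [hGhat _ _ ht0]
      have hexp : Real.exp (-‖x - y‖ ^ 2 / (C * t)) ≤ 1 := by
        apply Real.exp_le_one_iff.mpr
        apply div_nonpos_of_nonpos_of_nonneg
        · simp [sq_nonneg]
        · positivity
      nlinarith [mul_pos hC htp]
    have hGhat0 : 0 ≤ Ghat ‖x - y‖ t := by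
      rw [hGhat _ _ ht0]; positivity
    have h3 : G x y t ≤ min (ρ x / Real.sqrt t) 1 * (ρ y / Real.sqrt t)
        * (C * t ^ (-(n : ℝ) / 2)) := by
      refine h1.trans (mul_le_mul ?_ h2 hGhat0 (by positivity))
      exact mul_le_mul_of_nonneg_left (min_le_left _ _) hminx
    have h4 : G x y t * w y ≤ min (ρ x / Real.sqrt t) 1 * (ρ y / Real.sqrt t)
        * (C * t ^ (-(n : ℝ) / 2)) * w y :=
      mul_le_mul_of_nonneg_right h3 (hw0 y)
    calc G x y t * w y ≤ _ := h4
      _ = K * (w y * ρ y) := by rw [hK]; ring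
  have hint1 : ∫ y in Ω, G x y t * w y ≤ ∫ y in Ω, K * (w y * ρ y) := by
    apply integral_mono_of_nonneg
    · filter_upwards with y using mul_nonneg (hG0 _ _ _) (hw0 _)
    · exact hwint.const_mul K
    · filter_upwards [ae_restrict_mem hΩo.measurableSet] with y hy using hpt y hy
  have hint2 : ∫ y in Ω, K * (w y * ρ y) = K * ∫ y in Ω, w y * ρ y :=
    MeasureTheory.integral_const_mul K _
  have hKM : ∫ y in Ω, G x y t * w y ≤ K * M := by
    rw [hint2] at hint1
    exact hint1.trans (mul_le_mul_of_nonneg_left hwM hK0)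
  have hpow : t ^ (-(n : ℝ) / 2) / Real.sqrt t = t ^ (-((n : ℝ) + 1) / 2) := by
    rw [Real.sqrt_eq_rpow, ← Real.rpow_sub ht0]
    congr 1
    ring
  calc ∫ y in Ω, G x y t * w y ≤ K * M := hKM
    _ = C * M * min (ρ x / Real.sqrt t) 1 * (t ^ (-(n : ℝ) / 2) / Real.sqrt t) := by
        rw [hK]; ring
    _ = C * M * min (ρ x / Real.sqrt t) 1 * t ^ (-((n : ℝ) + 1) / 2) := by rw [hpow]
end
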